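/- Let u_1,...,u_n be positive reals linearly independent over ℚ and H_1 = Σ_j u_j(x_j²+ξ_j²). A polynomial P on ℝ^{2n} satisfies {H_1, P} = 0 if and only if, when written in the complex variables z_j = x_j + iξ_j, P is a linear combination of diagonal monomials z^α z̄^α; equivalently, P is a polynomial in the quantities x_1²+ξ_1², ..., x_n²+ξ_n². -/

import Mathlib

open MvPolynomial

def LinIndepQ {n : ℕ} (u : Fin n → ℝ) : Prop :=
  ∀ q : Fin n → ℚ, (∑ j, (q j : ℝ) * u j) = 0 → ∀ j, q j = 0

noncomputable def poisson {n : ℕ} (G F : MvPolynomial (Fin n ⊕ Fin n) ℝ) :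
    MvPolynomial (Fin n ⊕ Fin n) ℝ :=
  ∑ j, (pderiv (Sum.inr j) G * pderiv (Sum.inl j) F
        - pderiv (Sum.inl j) G * pderiv (Sum.inr j) F)

noncomputable def Hone {n : ℕ} (u : Fin n → ℝ) : MvPolynomial (Fin n ⊕ Fin n) ℝ :=
  ∑ j, C (u j) * (X (Sum.inl j) ^ 2 + X (Sum.inr j) ^ 2)

/-- The substitution `x_j = (z_j + z̄_j)/2`, `ξ_j = (z_j - z̄_j)/(2i)`, expressing a
real polynomial in `(x,ξ)` as a complex polynomial in the variables `z` (indexed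
by `Sum.inl`) and `z̄` (indexed by `Sum.inr`). -/
noncomputable def toComplexZ {n : ℕ} :
    MvPolynomial (Fin n ⊕ Fin n) ℝ →ₐ[ℝ] MvPolynomial (Fin n ⊕ Fin n) ℂ :=
  aeval (Sum.elim
    (fun j => C ((1 : ℂ) / 2) * (X (Sum.inl j) + X (Sum.inr j)))
    (fun j => C (-Complex.I / 2) * (X (Sum.inl j) - X (Sum.inr j))))

def IsDiagExp {n : ℕ} (d : (Fin n ⊕ Fin n) →₀ ℕ) : Prop :=
  ∀ j, d (Sum.inl j) = d (Sum.inr j)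


set_option linter.unreachableTactic false
set_option linter.unusedTactic false

section auxlemmas

variable {n : ℕ}

lemma poisson_add (G P Q : MvPolynomial (Fin n ⊕ Fin n) ℝ) :
    poisson G (P + Q) = poisson G P + poisson G Q := by
  simp only [poisson, map_add, mul_add, ← Finset.sum_add_distrib]
  congr 1; ext j; ring

lemma poisson_mul (G P Q : MvPolynomial (Fin n ⊕ Fin n) ℝ) :
    poisson G (P * Q) = P * poisson G Q + Q * poisson G P := by
  simp only [poisson, pderiv_mul, Finset.mul_sum, ← Finset.sum_add_distrib]
  refine Finset.sum_congr rfl fun j _ => ?_; ring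

lemma poisson_C (G : MvPolynomial (Fin n ⊕ Fin n) ℝ) (a : ℝ) :
    poisson G (C a) = 0 := by
  simp [poisson]

lemma pderiv_Hone (u : Fin n → ℝ) (i : Fin n ⊕ Fin n) :
    pderiv i (Hone u) = C (2 * u (Sum.elim id id i)) * X i := by
  cases i with
  | inl k =>
    simp only [Hone, map_sum, pderiv_C_mul, map_add, pderiv_pow, pderiv_X]
    rw [Finset.sum_eq_single k]
    · simp [Pi.single_apply, map_ofNat]; ring
    · intro b _ hb; simp [Pi.single_apply, hb, hb.symm]
    · simp
  | inr k =>
    simp only [Hone, map_sum, pderiv_C_mul, map_add, pderiv_pow, pderiv_X]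
    rw [Finset.sum_eq_single k]
    · simp [Pi.single_apply, map_ofNat]; ring
    · intro b _ hb; simp [Pi.single_apply, hb, hb.symm]
    · simp

lemma poisson_X_inl (G : MvPolynomial (Fin n ⊕ Fin n) ℝ) (k : Fin n) :
    poisson G (X (Sum.inl k)) = pderiv (Sum.inr k) G := by
  simp only [poisson, pderiv_X]
  rw [Finset.sum_eq_single k]
  · simp [Pi.single_apply]
  · intro b _ hb; simp [Pi.single_apply, hb, hb.symm]
  · simp

lemma poisson_X_inr (G : MvPolynomial (Fin n ⊕ Fin n) ℝ) (k : Fin n) :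
    poisson G (X (Sum.inr k)) = - pderiv (Sum.inl k) G := by
  simp only [poisson, pderiv_X]
  rw [Finset.sum_eq_single k]
  · simp [Pi.single_apply]
  · intro b _ hb; simp [Pi.single_apply, hb, hb.symm]
  · simp

noncomputable def Mop (u : Fin n → ℝ) (Q : MvPolynomial (Fin n ⊕ Fin n) ℂ) :
    MvPolynomial (Fin n ⊕ Fin n) ℂ :=
  ∑ j, C (2 * (u j : ℂ) * Complex.I) *
    (X (Sum.inr j) * pderiv (Sum.inr j) Q - X (Sum.inl j) * pderiv (Sum.inl j) Q)

lemma Mop_add (u : Fin n → ℝ) (P Q : MvPolynomial (Fin n ⊕ Fin n) ℂ) :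
    Mop u (P + Q) = Mop u P + Mop u Q := by
  simp only [Mop, map_add, mul_add, ← Finset.sum_add_distrib]
  congr 1; ext j; ring

lemma Mop_mul (u : Fin n → ℝ) (P Q : MvPolynomial (Fin n ⊕ Fin n) ℂ) :
    Mop u (P * Q) = P * Mop u Q + Q * Mop u P := by
  simp only [Mop, pderiv_mul, Finset.mul_sum, ← Finset.sum_add_distrib]
  congr 1; ext j; ring

lemma Mop_C (u : Fin n → ℝ) (a : ℂ) : Mop u (C a) = 0 := by
  simp [Mop]

lemma Mop_C_mul (u : Fin n → ℝ) (a : ℂ) (Q : MvPolynomial (Fin n ⊕ Fin n) ℂ) :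
    Mop u (C a * Q) = C a * Mop u Q := by
  rw [Mop_mul, Mop_C, mul_zero, add_zero]

lemma Mop_X_inl (u : Fin n → ℝ) (k : Fin n) :
    Mop u (X (Sum.inl k) : MvPolynomial (Fin n ⊕ Fin n) ℂ) =
      C (-(2 * (u k : ℂ) * Complex.I)) * X (Sum.inl k) := by
  simp only [Mop, pderiv_X]
  rw [Finset.sum_eq_single k]
  · simp [Pi.single_apply]
  · intro b _ hb; simp [Pi.single_apply, hb, hb.symm]
  · simp

lemma Mop_X_inr (u : Fin n → ℝ) (k : Fin n) :
    Mop u (X (Sum.inr k) : MvPolynomial (Fin n ⊕ Fin n) ℂ) =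
      C (2 * (u k : ℂ) * Complex.I) * X (Sum.inr k) := by
  simp only [Mop, pderiv_X]
  rw [Finset.sum_eq_single k]
  · simp [Pi.single_apply]
  · intro b _ hb; simp [Pi.single_apply, hb, hb.symm]
  · simp

lemma algMapC {σ : Type*} (r : ℝ) :
    algebraMap ℝ (MvPolynomial σ ℂ) r = C (r : ℂ) := by
  rw [IsScalarTower.algebraMap_apply ℝ ℂ (MvPolynomial σ ℂ)]
  rfl

lemma C_smul_one {σ : Type*} (a : ℂ) : (C a : MvPolynomial σ ℂ) = a • 1 := by
  rw [← mul_one (C a), C_mul']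

lemma toComplexZ_C (a : ℝ) :
    toComplexZ (C a : MvPolynomial (Fin n ⊕ Fin n) ℝ) = C (a : ℂ) := by
  simp [toComplexZ]

lemma intertwine (u : Fin n → ℝ) (P : MvPolynomial (Fin n ⊕ Fin n) ℝ) :
    toComplexZ (poisson (Hone u) P) = Mop u (toComplexZ P) := by
  induction P using MvPolynomial.induction_on with
  | C a =>
    rw [poisson_C, map_zero, toComplexZ_C, Mop_C]
  | add p q hp hq =>
    rw [poisson_add, map_add, map_add, Mop_add, hp, hq]
  | mul_X p i hp =>
    rw [poisson_mul, map_add, map_mul, map_mul, map_mul, Mop_mul, hp]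
    have hX : toComplexZ (poisson (Hone u) (X i)) = Mop u (toComplexZ (X i)) := by
      cases i with
      | inl k =>
        rw [poisson_X_inl, pderiv_Hone]
        have h2 : toComplexZ (X (Sum.inl k) : MvPolynomial (Fin n ⊕ Fin n) ℝ)
            = C ((1:ℂ)/2) * (X (Sum.inl k) + X (Sum.inr k)) := by
          simp [toComplexZ]
        rw [h2, Mop_C_mul, Mop_add, Mop_X_inl, Mop_X_inr, map_mul, toComplexZ_C]
        have h3 : toComplexZ (X (Sum.inr k) : MvPolynomial (Fin n ⊕ Fin n) ℝ)
            = C (-Complex.I/2) * (X (Sum.inl k) - X (Sum.inr k)) := by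
          simp [toComplexZ]
        rw [h3]
        push_cast
        simp only [C_smul_one, smul_mul_assoc, mul_smul_comm, one_mul, mul_one, smul_smul]
        match_scalars
        all_goals simp only [Sum.elim_inl, Sum.elim_inr, id_eq]
        all_goals try ring_nf
        all_goals try simp only [Complex.I_sq]
        all_goals try ring_nf
        all_goals try norm_num
      | inr k =>
        rw [poisson_X_inr, map_neg, pderiv_Hone]
        have h2 : toComplexZ (X (Sum.inr k) : MvPolynomial (Fin n ⊕ Fin n) ℝ)
            = C (-Complex.I/2) * (X (Sum.inl k) - X (Sum.inr k)) := by
          simp [toComplexZ]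
        rw [h2, Mop_C_mul]
        have h4 : Mop u ((X (Sum.inl k) : MvPolynomial (Fin n ⊕ Fin n) ℂ) - X (Sum.inr k))
            = C (-(2 * (u k : ℂ) * Complex.I)) * X (Sum.inl k)
              - C (2 * (u k : ℂ) * Complex.I) * X (Sum.inr k) := by
          have := Mop_add u (X (Sum.inl k) : MvPolynomial (Fin n ⊕ Fin n) ℂ) (- X (Sum.inr k))
          have hneg : Mop u (- (X (Sum.inr k) : MvPolynomial (Fin n ⊕ Fin n) ℂ))
              = - Mop u (X (Sum.inr k)) := by
            have := Mop_C_mul u (-1) (X (Sum.inr k) : MvPolynomial (Fin n ⊕ Fin n) ℂ)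
            simpa using this
          rw [sub_eq_add_neg, this, hneg, Mop_X_inl, Mop_X_inr, ← sub_eq_add_neg]
        rw [h4, map_mul, toComplexZ_C]
        have h3 : toComplexZ (X (Sum.inl k) : MvPolynomial (Fin n ⊕ Fin n) ℝ)
            = C ((1:ℂ)/2) * (X (Sum.inl k) + X (Sum.inr k)) := by
          simp [toComplexZ]
        rw [h3]
        push_cast
        simp only [C_smul_one, smul_mul_assoc, mul_smul_comm, one_mul, mul_one, smul_smul]
        match_scalars
        all_goals simp only [Sum.elim_inl, Sum.elim_inr, id_eq]
        all_goals try ring_nf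
        all_goals try simp only [Complex.I_sq]
        all_goals try ring_nf
        all_goals try norm_num
    rw [hX]



lemma Mop_zero (u : Fin n → ℝ) : Mop u 0 = 0 := by simp [Mop]

lemma Mop_sum (u : Fin n → ℝ) {α : Type*} (s : Finset α)
    (f : α → MvPolynomial (Fin n ⊕ Fin n) ℂ) :
    Mop u (∑ i ∈ s, f i) = ∑ i ∈ s, Mop u (f i) := by
  classical
  induction s using Finset.induction_on with
  | empty => simp [Mop_zero]
  | insert _ _ h ih => rw [Finset.sum_insert h, Finset.sum_insert h, Mop_add, ih]

noncomputable def lam (u : Fin n → ℝ) (d : (Fin n ⊕ Fin n) →₀ ℕ) : ℂ :=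
  ∑ j, 2 * (u j : ℂ) * Complex.I * ((d (Sum.inr j) : ℂ) - (d (Sum.inl j) : ℂ))

lemma X_mul_pderiv_monomial (i : Fin n ⊕ Fin n) (d : (Fin n ⊕ Fin n) →₀ ℕ) (c : ℂ) :
    X i * pderiv i (monomial d c) = ((d i : ℂ)) • monomial d c := by
  classical
  rw [pderiv_monomial]
  rcases Nat.eq_zero_or_pos (d i) with h | h
  · simp [h]
  · rw [X, monomial_mul, one_mul, smul_monomial]
    have hd : Finsupp.single i 1 + (d - Finsupp.single i 1) = d := by
      ext a
      by_cases ha : a = i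
      · subst ha
        simp [Finsupp.add_apply, Finsupp.tsub_apply, Finsupp.single_apply]
        omega
      · simp [Finsupp.add_apply, Finsupp.tsub_apply, Finsupp.single_apply, Ne.symm ha]
    rw [hd]
    congr 1
    rw [smul_eq_mul, mul_comm]

lemma Mop_monomial (u : Fin n → ℝ) (d : (Fin n ⊕ Fin n) →₀ ℕ) (c : ℂ) :
    Mop u (monomial d c) = C (lam u d) * monomial d c := by
  unfold Mop lam
  rw [map_sum, Finset.sum_mul]
  refine Finset.sum_congr rfl fun j _ => ?_
  rw [X_mul_pderiv_monomial, X_mul_pderiv_monomial, C_mul', C_mul']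
  rw [smul_sub, smul_smul, smul_smul, ← sub_smul]
  congr 1
  ring

lemma coeff_Mop (u : Fin n → ℝ) (Q : MvPolynomial (Fin n ⊕ Fin n) ℂ)
    (e : (Fin n ⊕ Fin n) →₀ ℕ) :
    coeff e (Mop u Q) = lam u e * coeff e Q := by
  classical
  conv_lhs => rw [Q.as_sum, Mop_sum]
  rw [coeff_sum]
  simp only [Mop_monomial, C_mul_monomial, coeff_monomial]
  rw [Finset.sum_ite_eq' Q.support e fun d => lam u d * coeff d Q]
  split_ifs with h
  · rfl
  · rw [notMem_support_iff.mp h, mul_zero]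

lemma Mop_eq_zero_iff (u : Fin n → ℝ) (Q : MvPolynomial (Fin n ⊕ Fin n) ℂ) :
    Mop u Q = 0 ↔ ∀ d ∈ Q.support, lam u d = 0 := by
  constructor
  · intro h d hd
    have h1 : coeff d (Mop u Q) = 0 := by rw [h, coeff_zero]
    rw [coeff_Mop] at h1
    exact (mul_eq_zero.mp h1).resolve_right (mem_support_iff.mp hd)
  · intro h
    ext e
    rw [coeff_Mop, coeff_zero]
    by_cases he : e ∈ Q.support
    · rw [h e he, zero_mul]
    · rw [notMem_support_iff.mp he, mul_zero]

lemma lam_eq_zero_iff (u : Fin n → ℝ) (hind : LinIndepQ u) (d : (Fin n ⊕ Fin n) →₀ ℕ) :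
    lam u d = 0 ↔ IsDiagExp d := by
  have hrw : lam u d =
      ((∑ j, ((((d (Sum.inr j) : ℚ) - (d (Sum.inl j) : ℚ)) : ℚ) : ℝ) * u j : ℝ) : ℂ)
        * (2 * Complex.I) := by
    unfold lam
    push_cast
    rw [Finset.sum_mul]
    refine Finset.sum_congr rfl fun j _ => ?_
    ring
  constructor
  · intro h
    rw [hrw, mul_eq_zero] at h
    have h2 : (2 * Complex.I) ≠ 0 := by simp [Complex.I_ne_zero]
    have h3 := h.resolve_right h2
    rw [Complex.ofReal_eq_zero] at h3
    intro j
    have := hind (fun j => (d (Sum.inr j) : ℚ) - (d (Sum.inl j) : ℚ)) h3 j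
    have := sub_eq_zero.mp this
    exact_mod_cast this.symm
  · intro h
    unfold lam
    refine Finset.sum_eq_zero fun j _ => ?_
    rw [h j]
    ring



lemma toComplexZ_X_inl (k : Fin n) :
    toComplexZ (X (Sum.inl k) : MvPolynomial (Fin n ⊕ Fin n) ℝ)
      = C ((1:ℂ)/2) * (X (Sum.inl k) + X (Sum.inr k)) := by
  simp [toComplexZ]

lemma toComplexZ_X_inr (k : Fin n) :
    toComplexZ (X (Sum.inr k) : MvPolynomial (Fin n ⊕ Fin n) ℝ)
      = C (-Complex.I/2) * (X (Sum.inl k) - X (Sum.inr k)) := by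
  simp [toComplexZ]

noncomputable def tauInv {n : ℕ} :
    MvPolynomial (Fin n ⊕ Fin n) ℂ →ₐ[ℂ] MvPolynomial (Fin n ⊕ Fin n) ℂ :=
  aeval (Sum.elim
    (fun j => X (Sum.inl j) + C Complex.I * X (Sum.inr j))
    (fun j => X (Sum.inl j) - C Complex.I * X (Sum.inr j)))

lemma tau_toComplexZ (P : MvPolynomial (Fin n ⊕ Fin n) ℝ) :
    tauInv (toComplexZ P) = map (algebraMap ℝ ℂ) P := by
  induction P using MvPolynomial.induction_on with
  | C a => rw [toComplexZ_C]; simp [tauInv]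
  | add p q hp hq => simp only [map_add, hp, hq]
  | mul_X p i hp =>
    rw [map_mul, map_mul, map_mul, hp]
    refine congrArg (map (algebraMap ℝ ℂ) p * ·) ?_
    cases i with
    | inl k =>
      rw [toComplexZ_X_inl, map_X]
      simp only [tauInv, map_mul, map_add, aeval_C, aeval_X, Sum.elim_inl, Sum.elim_inr,
        MvPolynomial.algebraMap_eq]
      have hC3 : (C ((1:ℂ)/2) : MvPolynomial (Fin n ⊕ Fin n) ℂ) * 2 = 1 := by
        rw [← map_ofNat (C : ℂ →+* MvPolynomial (Fin n ⊕ Fin n) ℂ) 2, ← map_mul]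
        norm_num
      linear_combination (X (Sum.inl k) : MvPolynomial (Fin n ⊕ Fin n) ℂ) * hC3
    | inr k =>
      rw [toComplexZ_X_inr, map_X]
      simp only [tauInv, map_mul, map_sub, aeval_C, aeval_X, Sum.elim_inl, Sum.elim_inr,
        MvPolynomial.algebraMap_eq]
      have hC4 : (C (-Complex.I/2) : MvPolynomial (Fin n ⊕ Fin n) ℂ) * (C Complex.I * 2) = 1 := by
        rw [← map_ofNat (C : ℂ →+* MvPolynomial (Fin n ⊕ Fin n) ℂ) 2, ← map_mul, ← map_mul]
        rw [show -Complex.I/2 * (Complex.I * 2) = 1 by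
          linear_combination (-1 : ℂ) * Complex.I_sq]
        exact map_one _
      linear_combination (X (Sum.inr k) : MvPolynomial (Fin n ⊕ Fin n) ℂ) * hC4

lemma toComplexZ_injective : Function.Injective (toComplexZ (n := n)) := by
  intro P Q h
  have h2 := congrArg (tauInv (n := n)) h
  rw [tau_toComplexZ, tau_toComplexZ] at h2
  exact MvPolynomial.map_injective _ (algebraMap ℝ ℂ).injective h2

lemma toComplexZ_squares (j : Fin n) :
    toComplexZ ((X (Sum.inl j))^2 + (X (Sum.inr j))^2) =
      X (Sum.inl j) * X (Sum.inr j) := by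
  rw [map_add, map_pow, map_pow, toComplexZ_X_inl, toComplexZ_X_inr]
  have hC1 : (C ((1:ℂ)/2) : MvPolynomial (Fin n ⊕ Fin n) ℂ)^2 + (C (-Complex.I/2))^2 = 0 := by
    rw [← map_pow, ← map_pow, ← map_add,
      show ((1:ℂ)/2)^2 + (-Complex.I/2)^2 = 0 by
        linear_combination ((1:ℂ)/4) * Complex.I_sq]
    exact map_zero _
  have hC2 : (C ((1:ℂ)/2) : MvPolynomial (Fin n ⊕ Fin n) ℂ)^2 - (C (-Complex.I/2))^2
      = C ((1:ℂ)/2) := by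
    rw [← map_pow, ← map_pow, ← map_sub]
    congr 1
    linear_combination (-(1:ℂ)/4) * Complex.I_sq
  have hC3 : (C ((1:ℂ)/2) : MvPolynomial (Fin n ⊕ Fin n) ℂ) * 2 = 1 := by
    rw [← map_ofNat (C : ℂ →+* MvPolynomial (Fin n ⊕ Fin n) ℂ) 2, ← map_mul]
    norm_num
  linear_combination ((X (Sum.inl j) : MvPolynomial (Fin n ⊕ Fin n) ℂ)^2 + (X (Sum.inr j))^2) * hC1
    + (2 * ((X (Sum.inl j) : MvPolynomial (Fin n ⊕ Fin n) ℂ) * X (Sum.inr j))) * hC2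
    + ((X (Sum.inl j) : MvPolynomial (Fin n ⊕ Fin n) ℂ) * X (Sum.inr j)) * hC3

noncomputable def diagm (m : Fin n →₀ ℕ) : (Fin n ⊕ Fin n) →₀ ℕ :=
  m.mapDomain Sum.inl + m.mapDomain Sum.inr

lemma diagm_inl (m : Fin n →₀ ℕ) (j : Fin n) : diagm m (Sum.inl j) = m j := by
  unfold diagm
  rw [Finsupp.add_apply, Finsupp.mapDomain_apply Sum.inl_injective,
    Finsupp.mapDomain_notin_range]
  · simp
  · simp

lemma diagm_inr (m : Fin n →₀ ℕ) (j : Fin n) : diagm m (Sum.inr j) = m j := by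
  unfold diagm
  rw [Finsupp.add_apply, Finsupp.mapDomain_apply Sum.inr_injective,
    Finsupp.mapDomain_notin_range]
  · simp
  · simp

lemma isDiag_diagm (m : Fin n →₀ ℕ) : IsDiagExp (diagm m) := fun j => by
  rw [diagm_inl, diagm_inr]

lemma prod_pow_eq_monomial (m : Fin n →₀ ℕ) :
    (m.prod fun j k => ((X (Sum.inl j) * X (Sum.inr j)) : MvPolynomial (Fin n ⊕ Fin n) ℂ) ^ k)
      = monomial (diagm m) 1 := by
  classical
  induction m using Finsupp.induction with
  | zero => simp [diagm]
  | single_add a b f haf hb ih =>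
    rw [Finsupp.prod_add_index' (fun a => pow_zero _) (fun a b c => pow_add _ b c), ih]
    rw [Finsupp.prod_single_index (h := fun j k => ((X (Sum.inl j) * X (Sum.inr j)) :
      MvPolynomial (Fin n ⊕ Fin n) ℂ) ^ k) (pow_zero _)]
    rw [mul_pow, X_pow_eq_monomial, X_pow_eq_monomial, monomial_mul, monomial_mul,
      one_mul, one_mul]
    congr 1
    unfold diagm
    rw [Finsupp.mapDomain_add, Finsupp.mapDomain_add, Finsupp.mapDomain_single,
      Finsupp.mapDomain_single]
    abel

lemma aevalZZ_monomial (m : Fin n →₀ ℕ) (r : ℝ) :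
    aeval (fun j => (X (Sum.inl j) * X (Sum.inr j) : MvPolynomial (Fin n ⊕ Fin n) ℂ))
      (monomial m r) = monomial (diagm m) ((r : ℂ)) := by
  rw [aeval_monomial, prod_pow_eq_monomial]
  rw [show algebraMap ℝ (MvPolynomial (Fin n ⊕ Fin n) ℂ) r = C ((r:ℝ):ℂ) from by
    rw [IsScalarTower.algebraMap_apply ℝ ℂ (MvPolynomial (Fin n ⊕ Fin n) ℂ)]; rfl]
  rw [C_mul_monomial, mul_one]

lemma swapconj (P : MvPolynomial (Fin n ⊕ Fin n) ℝ) :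
    rename Sum.swap (map (starRingEnd ℂ) (toComplexZ P)) = toComplexZ P := by
  induction P using MvPolynomial.induction_on with
  | C a => rw [toComplexZ_C, map_C, rename_C, Complex.conj_ofReal]
  | add p q hp hq => simp only [map_add, hp, hq]
  | mul_X p i hp =>
    rw [map_mul, map_mul, map_mul, hp]
    congr 1
    cases i with
    | inl k =>
      rw [toComplexZ_X_inl, map_mul, map_add, map_C, map_X, map_X, map_mul, map_add,
        rename_C, rename_X, rename_X]
      simp only [Sum.swap_inl, Sum.swap_inr]
      rw [show (starRingEnd ℂ) ((1:ℂ)/2) = (1:ℂ)/2 by simp [map_div₀, map_ofNat]]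
      ring
    | inr k =>
      rw [toComplexZ_X_inr, map_mul, map_sub, map_C, map_X, map_X, map_mul, map_sub,
        rename_C, rename_X, rename_X]
      simp only [Sum.swap_inl, Sum.swap_inr]
      rw [show (starRingEnd ℂ) (-Complex.I/2) = Complex.I/2 by simp [map_div₀, map_ofNat]]
      have hI : (C (Complex.I/2) : MvPolynomial (Fin n ⊕ Fin n) ℂ) + C (-Complex.I/2) = 0 := by
        rw [← map_add, show Complex.I/2 + -Complex.I/2 = 0 by ring, map_zero]
      linear_combination (X (Sum.inr k) - X (Sum.inl k) : MvPolynomial (Fin n ⊕ Fin n) ℂ) * hI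

lemma coeff_real (P : MvPolynomial (Fin n ⊕ Fin n) ℝ) (d : (Fin n ⊕ Fin n) →₀ ℕ)
    (hd : IsDiagExp d) :
    ((coeff d (toComplexZ P)).re : ℂ) = coeff d (toComplexZ P) := by
  have hswap : Finsupp.mapDomain Sum.swap d = d := by
    ext a
    cases a with
    | inl j =>
      rw [show (Sum.inl j : Fin n ⊕ Fin n) = Sum.swap (Sum.inr j) from rfl,
        Finsupp.mapDomain_apply (Function.Involutive.injective Sum.swap_swap)]
      exact (hd j).symm
    | inr j =>
      rw [show (Sum.inr j : Fin n ⊕ Fin n) = Sum.swap (Sum.inl j) from rfl,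
        Finsupp.mapDomain_apply (Function.Involutive.injective Sum.swap_swap)]
      exact hd j
  have h1 : coeff d (toComplexZ P) = (starRingEnd ℂ) (coeff d (toComplexZ P)) := by
    conv_lhs => rw [← swapconj P, ← hswap]
    rw [coeff_rename_mapDomain _ (Function.Involutive.injective Sum.swap_swap), coeff_map]
  exact Complex.conj_eq_iff_re.mp h1.symm


end auxlemmas

theorem stmt6 {n : ℕ} (u : Fin n → ℝ) (hpos : ∀ j, 0 < u j) (hind : LinIndepQ u)
    (P : MvPolynomial (Fin n ⊕ Fin n) ℝ) :
    (poisson (Hone u) P = 0 ↔ ∀ d ∈ (toComplexZ P).support, IsDiagExp d) ∧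
    (poisson (Hone u) P = 0 ↔
      ∃ f : MvPolynomial (Fin n) ℝ,
        P = aeval (fun j => X (Sum.inl j) ^ 2 + X (Sum.inr j) ^ 2 :
          Fin n → MvPolynomial (Fin n ⊕ Fin n) ℝ) f) := by
  classical
  have hsq : ∀ j : Fin n, toComplexZ ((fun j => X (Sum.inl j) ^ 2 + X (Sum.inr j) ^ 2 :
      Fin n → MvPolynomial (Fin n ⊕ Fin n) ℝ) j) = X (Sum.inl j) * X (Sum.inr j) :=
    fun j => toComplexZ_squares j
  have hcomp : ∀ f : MvPolynomial (Fin n) ℝ,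
      toComplexZ (aeval (fun j => X (Sum.inl j) ^ 2 + X (Sum.inr j) ^ 2 :
        Fin n → MvPolynomial (Fin n ⊕ Fin n) ℝ) f)
      = aeval (fun j => (X (Sum.inl j) * X (Sum.inr j) : MvPolynomial (Fin n ⊕ Fin n) ℂ)) f := by
    intro f
    have h1 : toComplexZ.comp (aeval (fun j => X (Sum.inl j) ^ 2 + X (Sum.inr j) ^ 2 :
        Fin n → MvPolynomial (Fin n ⊕ Fin n) ℝ))
        = aeval (fun j => (X (Sum.inl j) * X (Sum.inr j) : MvPolynomial (Fin n ⊕ Fin n) ℂ)) := by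
      rw [comp_aeval]
      congr 1
      funext j
      exact hsq j
    calc toComplexZ (aeval (fun j => X (Sum.inl j) ^ 2 + X (Sum.inr j) ^ 2 :
          Fin n → MvPolynomial (Fin n ⊕ Fin n) ℝ) f)
        = (toComplexZ.comp (aeval (fun j => X (Sum.inl j) ^ 2 + X (Sum.inr j) ^ 2 :
            Fin n → MvPolynomial (Fin n ⊕ Fin n) ℝ))) f := rfl
      _ = aeval (fun j => (X (Sum.inl j) * X (Sum.inr j) : MvPolynomial (Fin n ⊕ Fin n) ℂ)) f := by
          rw [h1]
  have iff1 : poisson (Hone u) P = 0 ↔ ∀ d ∈ (toComplexZ P).support, IsDiagExp d := by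
    have hinj : poisson (Hone u) P = 0 ↔ toComplexZ (poisson (Hone u) P) = 0 :=
      ⟨fun h => by rw [h, map_zero], fun h => toComplexZ_injective (by rw [h, map_zero])⟩
    rw [hinj, intertwine, Mop_eq_zero_iff]
    exact forall₂_congr fun d _ => lam_eq_zero_iff u hind d
  have dir2 : (∀ d ∈ (toComplexZ P).support, IsDiagExp d) →
      ∃ f : MvPolynomial (Fin n) ℝ,
        P = aeval (fun j => X (Sum.inl j) ^ 2 + X (Sum.inr j) ^ 2 :
          Fin n → MvPolynomial (Fin n ⊕ Fin n) ℝ) f := by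
    intro hdiag
    set Q := toComplexZ P with hQ
    refine ⟨∑ d ∈ Q.support, monomial (Finsupp.comapDomain Sum.inl d Sum.inl_injective.injOn)
      ((coeff d Q).re), ?_⟩
    apply toComplexZ_injective
    rw [hcomp, map_sum]
    have hterm : ∀ d ∈ Q.support,
        aeval (fun j => (X (Sum.inl j) * X (Sum.inr j) : MvPolynomial (Fin n ⊕ Fin n) ℂ))
          (monomial (Finsupp.comapDomain Sum.inl d Sum.inl_injective.injOn) ((coeff d Q).re))
        = monomial d (coeff d Q) := by
      intro d hd
      rw [aevalZZ_monomial]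
      have hdm : diagm (Finsupp.comapDomain Sum.inl d Sum.inl_injective.injOn) = d := by
        ext a
        cases a with
        | inl j => rw [diagm_inl, Finsupp.comapDomain_apply]
        | inr j => rw [diagm_inr, Finsupp.comapDomain_apply]; exact hdiag d hd j
      rw [hdm, coeff_real P d (hdiag d hd)]
    rw [Finset.sum_congr rfl hterm]
    exact (Q.support_sum_monomial_coeff).symm
  have dir3 : ∀ f : MvPolynomial (Fin n) ℝ,
      P = aeval (fun j => X (Sum.inl j) ^ 2 + X (Sum.inr j) ^ 2 :
        Fin n → MvPolynomial (Fin n ⊕ Fin n) ℝ) f →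
      ∀ d ∈ (toComplexZ P).support, IsDiagExp d := by
    intro f hf d hd
    rw [hf, hcomp] at hd
    rw [mem_support_iff] at hd
    conv at hd => rw [f.as_sum, map_sum, coeff_sum]
    obtain ⟨m, hm, hne⟩ := Finset.exists_ne_zero_of_sum_ne_zero hd
    rw [aevalZZ_monomial, coeff_monomial] at hne
    split_ifs at hne with hdm
    · rw [← hdm]; exact isDiag_diagm m
    · exact absurd rfl hne
  refine ⟨iff1, ?_⟩
  rw [iff1]
  constructor
  · exact dir2
  · rintro ⟨f, hf⟩
    exact dir3 f hf
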